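/- arXiv:1704.04245 — 2 statements merged into one kernel-verified Lean document; each statement's English description precedes it below -/
import Mathlib

section
/- For every n ∈ ℤ the function Q_n satisfies: (i) the 2+1 Toda lattice equation (1/4)ΔQ_n = e^{Q_{n-1}-Q_n} − e^{Q_n-Q_{n+1}} at every point of ℝ²; (ii) the travelling-wave relation Q_{n+1}(x,y) = Q_n(x + 1/(2√2), y) for all (x,y) ∈ ℝ²; (iii) the decay estimate: there is a constant C_n > 0 with |Q_n(x,y)| ≤ C_n / √(1 + x² + y²) for all (x,y) ∈ ℝ². -/
noncomputable section

/-- Partial derivative in the first variable. -/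
def pdxR (f : ℝ → ℝ → ℝ) (x y : ℝ) : ℝ := deriv (fun x' => f x' y) x

/-- Partial derivative in the second variable. -/
def pdyR (f : ℝ → ℝ → ℝ) (x y : ℝ) : ℝ := deriv (fun y' => f x y') y

/-- The Laplacian on ℝ². -/
def lap (f : ℝ → ℝ → ℝ) (x y : ℝ) : ℝ := pdxR (pdxR f) x y + pdyR (pdyR f) x y

/-- The lump solution Q_n of the 2+1 Toda lattice. -/
def Qn (n : ℤ) (x y : ℝ) : ℝ :=
  Real.log ((1/4 + ((n : ℝ) - 1 + 2 * Real.sqrt 2 * x)^2 + 4*y^2) /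
            (1/4 + ((n : ℝ) + 2 * Real.sqrt 2 * x)^2 + 4*y^2))

namespace LumpAux

def d (a x y : ℝ) : ℝ := 1/4 + (a + 2 * Real.sqrt 2 * x)^2 + 4*y^2

lemma d_pos (a x y : ℝ) : 0 < d a x y := by unfold d; positivity

lemma hs2 : Real.sqrt 2 ^ 2 = 2 := Real.sq_sqrt (by norm_num)

lemma hd_x (a x y : ℝ) :
    HasDerivAt (fun x' => d a x' y) (4 * Real.sqrt 2 * (a + 2 * Real.sqrt 2 * x)) x := by
  have h : HasDerivAt (fun x' : ℝ => a + 2 * Real.sqrt 2 * x') (2 * Real.sqrt 2) x := by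
    simpa using ((hasDerivAt_id x).const_mul (2 * Real.sqrt 2)).const_add a
  have h2 := ((h.pow 2).const_add (1/4)).add_const (4*y^2)
  unfold d
  refine h2.congr_deriv ?_
  ring

lemma hlog_x (a x y : ℝ) :
    HasDerivAt (fun x' => Real.log (d a x' y))
      (4 * Real.sqrt 2 * (a + 2 * Real.sqrt 2 * x) / d a x y) x :=
  (hd_x a x y).log (d_pos a x y).ne'

lemma hd2_x (a x y : ℝ) :
    HasDerivAt (fun x' => 4 * Real.sqrt 2 * (a + 2 * Real.sqrt 2 * x') / d a x' y)
      ((16 * d a x y - 32 * (a + 2 * Real.sqrt 2 * x)^2) / (d a x y)^2) x := by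
  have h : HasDerivAt (fun x' : ℝ => 4 * Real.sqrt 2 * (a + 2 * Real.sqrt 2 * x'))
      (4 * Real.sqrt 2 * (2 * Real.sqrt 2)) x := by
    have : HasDerivAt (fun x' : ℝ => a + 2 * Real.sqrt 2 * x') (2 * Real.sqrt 2) x := by
      simpa using ((hasDerivAt_id x).const_mul (2 * Real.sqrt 2)).const_add a
    exact this.const_mul (4 * Real.sqrt 2)
  have h2 := h.div (hd_x a x y) (d_pos a x y).ne'
  refine h2.congr_deriv ?_
  symm
  congr 1
  linear_combination (16*(a + 2*Real.sqrt 2*x)^2 - 8 * d a x y) * hs2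

lemma hd_y (a x y : ℝ) :
    HasDerivAt (fun y' => d a x y') (8 * y) y := by
  have h : HasDerivAt (fun y' : ℝ => 4 * y' ^ 2) (8 * y) y := by
    have h0 := (hasDerivAt_pow 2 y).const_mul (4:ℝ)
    refine h0.congr_deriv ?_
    ring
  unfold d
  simpa using h.const_add (1/4 + (a + 2 * Real.sqrt 2 * x)^2)

lemma hlog_y (a x y : ℝ) :
    HasDerivAt (fun y' => Real.log (d a x y'))
      (8 * y / d a x y) y :=
  (hd_y a x y).log (d_pos a x y).ne'

lemma hd2_y (a x y : ℝ) :
    HasDerivAt (fun y' => 8 * y' / d a x y')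
      ((8 * d a x y - 64 * y^2) / (d a x y)^2) y := by
  have h : HasDerivAt (fun y' : ℝ => 8 * y') (8:ℝ) y := by
    simpa using (hasDerivAt_id y).const_mul (8:ℝ)
  have h2 := h.div (hd_y a x y) (d_pos a x y).ne'
  refine h2.congr_deriv ?_
  ring


lemma Qn_eq (n : ℤ) (x y : ℝ) :
    Qn n x y = Real.log (d ((n:ℝ) - 1) x y) - Real.log (d (n:ℝ) x y) := by
  unfold Qn d
  rw [Real.log_div (by positivity) (by positivity)]

lemma Qn_fun (n : ℤ) :
    Qn n = fun x y => Real.log (d ((n:ℝ) - 1) x y) - Real.log (d (n:ℝ) x y) :=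
  funext fun x => funext fun y => Qn_eq n x y

lemma pdx_Q (n : ℤ) (x y : ℝ) :
    pdxR (Qn n) x y = 4 * Real.sqrt 2 * ((n:ℝ) - 1 + 2 * Real.sqrt 2 * x) / d ((n:ℝ) - 1) x y
      - 4 * Real.sqrt 2 * ((n:ℝ) + 2 * Real.sqrt 2 * x) / d (n:ℝ) x y := by
  rw [Qn_fun, pdxR]
  exact ((hlog_x _ x y).sub (hlog_x _ x y)).deriv

lemma pdxx_Q (n : ℤ) (x y : ℝ) :
    pdxR (pdxR (Qn n)) x y =
      (16 * d ((n:ℝ)-1) x y - 32 * ((n:ℝ) - 1 + 2 * Real.sqrt 2 * x)^2) / (d ((n:ℝ)-1) x y)^2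
      - (16 * d (n:ℝ) x y - 32 * ((n:ℝ) + 2 * Real.sqrt 2 * x)^2) / (d (n:ℝ) x y)^2 := by
  have hfun : (fun x' => pdxR (Qn n) x' y) =
      (fun x' => 4 * Real.sqrt 2 * ((n:ℝ) - 1 + 2 * Real.sqrt 2 * x') / d ((n:ℝ) - 1) x' y
        - 4 * Real.sqrt 2 * ((n:ℝ) + 2 * Real.sqrt 2 * x') / d (n:ℝ) x' y) :=
    funext fun x' => pdx_Q n x' y
  show deriv (fun x' => pdxR (Qn n) x' y) x = _
  rw [hfun]
  exact ((hd2_x _ x y).sub (hd2_x _ x y)).deriv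

lemma pdy_Q (n : ℤ) (x y : ℝ) :
    pdyR (Qn n) x y = 8 * y / d ((n:ℝ) - 1) x y - 8 * y / d (n:ℝ) x y := by
  rw [Qn_fun, pdyR]
  exact ((hlog_y _ x y).sub (hlog_y _ x y)).deriv

lemma pdyy_Q (n : ℤ) (x y : ℝ) :
    pdyR (pdyR (Qn n)) x y =
      (8 * d ((n:ℝ)-1) x y - 64 * y^2) / (d ((n:ℝ)-1) x y)^2
      - (8 * d (n:ℝ) x y - 64 * y^2) / (d (n:ℝ) x y)^2 := by
  have hfun : (fun y' => pdyR (Qn n) x y') =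
      (fun y' => 8 * y' / d ((n:ℝ) - 1) x y' - 8 * y' / d (n:ℝ) x y') :=
    funext fun y' => pdy_Q n x y'
  show deriv (fun y' => pdyR (Qn n) x y') y = _
  rw [hfun]
  exact ((hd2_y _ x y).sub (hd2_y _ x y)).deriv

/-- Key single-site identity. -/
lemma key (a x y : ℝ) :
    (1/4) * ((16 * d a x y - 32 * (a + 2 * Real.sqrt 2 * x)^2) / (d a x y)^2
      + (8 * d a x y - 64 * y^2) / (d a x y)^2)
    = d (a-1) x y * d (a+1) x y / (d a x y)^2 - 1 := by
  have h0 := (d_pos a x y).ne'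
  field_simp
  unfold d
  ring

lemma exp_eq (a x y : ℝ) :
    Real.exp ((Real.log (d (a-1) x y) - Real.log (d a x y))
      - (Real.log (d a x y) - Real.log (d (a+1) x y)))
    = d (a-1) x y * d (a+1) x y / (d a x y)^2 := by
  rw [show (Real.log (d (a-1) x y) - Real.log (d a x y))
      - (Real.log (d a x y) - Real.log (d (a+1) x y))
      = Real.log (d (a-1) x y * d (a+1) x y / (d a x y)^2) by
    rw [Real.log_div (mul_pos (d_pos _ x y) (d_pos _ x y)).ne' (pow_ne_zero 2 (d_pos a x y).ne'),
        Real.log_mul (d_pos _ x y).ne' (d_pos _ x y).ne', Real.log_pow]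
    push_cast; ring]
  exact Real.exp_log (div_pos (mul_pos (d_pos _ x y) (d_pos _ x y)) (pow_pos (d_pos a x y) 2))

theorem part1 (n : ℤ) (x y : ℝ) : (1/4) * lap (Qn n) x y =
      Real.exp (Qn (n-1) x y - Qn n x y) - Real.exp (Qn n x y - Qn (n+1) x y) := by
  have e1 : Qn (n-1) x y - Qn n x y
      = (Real.log (d ((n:ℝ)-1-1) x y) - Real.log (d ((n:ℝ)-1) x y))
        - (Real.log (d ((n:ℝ)-1) x y) - Real.log (d ((n:ℝ)-1+1) x y)) := by
    rw [Qn_eq, Qn_eq]; push_cast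
    norm_num
  have e2 : Qn n x y - Qn (n+1) x y
      = (Real.log (d ((n:ℝ)-1) x y) - Real.log (d (n:ℝ) x y))
        - (Real.log (d (n:ℝ) x y) - Real.log (d ((n:ℝ)+1) x y)) := by
    rw [Qn_eq, Qn_eq]; push_cast
    norm_num
  rw [e1, e2, exp_eq, exp_eq, lap, pdxx_Q, pdyy_Q]
  have k1 := key ((n:ℝ)-1) x y
  have k2 := key (n:ℝ) x y
  have : (1/4 : ℝ) * ((16 * d ((n:ℝ)-1) x y - 32 * ((n:ℝ) - 1 + 2 * Real.sqrt 2 * x)^2) / (d ((n:ℝ)-1) x y)^2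
      + (8 * d ((n:ℝ)-1) x y - 64 * y^2) / (d ((n:ℝ)-1) x y)^2)
      - (1/4 : ℝ) * ((16 * d (n:ℝ) x y - 32 * ((n:ℝ) + 2 * Real.sqrt 2 * x)^2) / (d (n:ℝ) x y)^2
      + (8 * d (n:ℝ) x y - 64 * y^2) / (d (n:ℝ) x y)^2)
      = d ((n:ℝ)-1-1) x y * d ((n:ℝ)-1+1) x y / (d ((n:ℝ)-1) x y)^2
        - d ((n:ℝ)-1) x y * d ((n:ℝ)+1) x y / (d (n:ℝ) x y)^2 := by
    rw [k1, k2]; ring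
  rw [← this]; ring


theorem part2 (n : ℤ) (x y : ℝ) : Qn (n+1) x y = Qn n (x + 1/(2*Real.sqrt 2)) y := by
  have hs : Real.sqrt 2 ≠ 0 := by positivity
  have h2 : 2 * Real.sqrt 2 * (x + 1/(2*Real.sqrt 2)) = 2 * Real.sqrt 2 * x + 1 := by
    field_simp
  unfold Qn
  rw [h2]
  push_cast
  ring_nf


set_option maxHeartbeats 1000000 in
theorem part3 (n : ℤ) : ∃ C > (0:ℝ), ∀ x y : ℝ, |Qn n x y| ≤ C / Real.sqrt (1 + x^2 + y^2) := by
  set c₁ : ℝ := 9 + 2*|(n:ℝ)| with hc₁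
  set K : ℝ := 4 + 32*(n:ℝ)^2 with hK
  set K' : ℝ := 4 + 32*((n:ℝ)-1)^2 with hK'
  have hc₁pos : 0 < c₁ := by positivity
  have hKpos : 0 < K := by positivity
  have hK'pos : 0 < K' := by positivity
  refine ⟨3*c₁*(K+K'), by positivity, fun x y => ?_⟩
  set A := d ((n:ℝ)-1) x y with hAdef
  set B := d (n:ℝ) x y with hBdef
  have hA : 0 < A := d_pos _ x y
  have hB : 0 < B := d_pos _ x y
  set R := Real.sqrt (1 + x^2 + y^2) with hRdef
  have hRpos : 0 < R := Real.sqrt_pos.2 (by positivity)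
  set M := |A - B| with hM
  rw [le_div_iff₀ hRpos]
  -- |Q| ≤ M/A + M/B
  have habs : |Qn n x y| ≤ M/A + M/B := by
    rw [Qn_eq]
    have h1 : Real.log A - Real.log B ≤ (A - B)/B := by
      have h := Real.log_le_sub_one_of_pos (div_pos hA hB)
      rw [Real.log_div hA.ne' hB.ne'] at h
      have : A/B - 1 = (A-B)/B := by field_simp
      linarith
    have h2 : Real.log B - Real.log A ≤ (B - A)/A := by
      have h := Real.log_le_sub_one_of_pos (div_pos hB hA)
      rw [Real.log_div hB.ne' hA.ne'] at h
      have : B/A - 1 = (B-A)/A := by field_simp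
      linarith
    have h3 : (A - B)/B ≤ M/B := by gcongr; exact le_abs_self _
    have h4 : (B - A)/A ≤ M/A := by
      gcongr; rw [hM, abs_sub_comm]; exact le_abs_self _
    have h5 : 0 ≤ M/A := by positivity
    have h6 : 0 ≤ M/B := by positivity
    rw [abs_le]
    constructor <;> linarith
  -- M * R ≤ 3 c₁ (1+x²+y²)
  have hABsub : A - B = 1 - 2*(n:ℝ) - 4*Real.sqrt 2*x := by
    rw [hAdef, hBdef]; unfold d; ring
  have hsle : Real.sqrt 2 ≤ 2 := by
    nlinarith [hs2, Real.sqrt_nonneg 2]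
  have hs0 : 0 ≤ Real.sqrt 2 := Real.sqrt_nonneg 2
  have hM1 : M ≤ c₁ * (1 + |x|) := by
    rw [hM, hABsub, hc₁]
    rw [abs_le]
    constructor <;>
      nlinarith [le_abs_self (n:ℝ), neg_abs_le (n:ℝ), le_abs_self x, neg_abs_le x,
        abs_nonneg x, abs_nonneg (n:ℝ),
        mul_nonneg (sub_nonneg.2 hsle) (sub_nonneg.2 (neg_abs_le x)),
        mul_nonneg (sub_nonneg.2 hsle) (sub_nonneg.2 (le_abs_self x)),
        mul_nonneg hs0 (sub_nonneg.2 (neg_abs_le x)),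
        mul_nonneg hs0 (sub_nonneg.2 (le_abs_self x))]
  have hR1 : R ≤ 1 + |x| + |y| := by
    rw [hRdef]
    have h1 : (1 + x^2 + y^2) ≤ (1 + |x| + |y|)^2 := by
      nlinarith [abs_nonneg x, abs_nonneg y, sq_abs x, sq_abs y,
        mul_nonneg (abs_nonneg x) (abs_nonneg y)]
    calc Real.sqrt (1 + x^2 + y^2) ≤ Real.sqrt ((1 + |x| + |y|)^2) := Real.sqrt_le_sqrt h1
      _ = 1 + |x| + |y| := Real.sqrt_sq (by positivity)
  have hMR : M * R ≤ 3 * c₁ * (1 + x^2 + y^2) := by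
    have hMnn : 0 ≤ M := abs_nonneg _
    calc M * R ≤ (c₁ * (1 + |x|)) * (1 + |x| + |y|) := by
          apply mul_le_mul hM1 hR1 hRpos.le (by positivity)
      _ ≤ 3 * c₁ * (1 + x^2 + y^2) := by
          nlinarith [abs_nonneg x, abs_nonneg y, sq_abs x, sq_abs y, hc₁pos,
            sq_nonneg (|x| - |y|), sq_nonneg (1 - |x|), sq_nonneg (1 - |y|)]
  -- 1+x²+y² ≤ K' A, ≤ K B
  have hUA : 16*x^2 ≤ 4*((n:ℝ)-1 + 2*Real.sqrt 2*x)^2 + 8*((n:ℝ)-1)^2 := by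
    nlinarith [sq_nonneg ((n:ℝ)-1 + Real.sqrt 2*x), hs2, sq_nonneg ((n:ℝ)-1), sq_nonneg x,
      mul_self_nonneg ((n:ℝ)-1 + Real.sqrt 2*x)]
  have hUB : 16*x^2 ≤ 4*((n:ℝ) + 2*Real.sqrt 2*x)^2 + 8*(n:ℝ)^2 := by
    nlinarith [sq_nonneg ((n:ℝ) + Real.sqrt 2*x), hs2, sq_nonneg (n:ℝ), sq_nonneg x]
  have hKA : 1 + x^2 + y^2 ≤ K' * A := by
    rw [hK', hAdef]; unfold d
    nlinarith [hUA, mul_nonneg (sq_nonneg ((n:ℝ)-1)) (sq_nonneg ((n:ℝ)-1 + 2*Real.sqrt 2*x)),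
      sq_nonneg y, mul_nonneg (sq_nonneg ((n:ℝ)-1)) (sq_nonneg y)]
  have hKB : 1 + x^2 + y^2 ≤ K * B := by
    rw [hK, hBdef]; unfold d
    nlinarith [hUB, mul_nonneg (sq_nonneg (n:ℝ)) (sq_nonneg ((n:ℝ) + 2*Real.sqrt 2*x)),
      sq_nonneg y, mul_nonneg (sq_nonneg (n:ℝ)) (sq_nonneg y)]
  -- assemble
  have hMA : M * R / A ≤ 3 * c₁ * K' := by
    rw [div_le_iff₀ hA]
    calc M * R ≤ 3 * c₁ * (1 + x^2 + y^2) := hMR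
      _ ≤ 3 * c₁ * (K' * A) := by nlinarith [hKA, hc₁pos]
      _ = 3 * c₁ * K' * A := by ring
  have hMB : M * R / B ≤ 3 * c₁ * K := by
    rw [div_le_iff₀ hB]
    calc M * R ≤ 3 * c₁ * (1 + x^2 + y^2) := hMR
      _ ≤ 3 * c₁ * (K * B) := by nlinarith [hKB, hc₁pos]
      _ = 3 * c₁ * K * B := by ring
  calc |Qn n x y| * R ≤ (M/A + M/B) * R := by
        apply mul_le_mul_of_nonneg_right habs hRpos.le
    _ = M * R / A + M * R / B := by ring
    _ ≤ 3 * c₁ * K' + 3 * c₁ * K := add_le_add hMA hMB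
    _ = 3 * c₁ * (K + K') := by ring


end LumpAux

/-- Q_n solves the 2+1 Toda lattice, is of traveling wave type, and decays like 1/r. -/
theorem lump_properties (n : ℤ) :
    (∀ x y : ℝ, (1/4) * lap (Qn n) x y =
      Real.exp (Qn (n-1) x y - Qn n x y) - Real.exp (Qn n x y - Qn (n+1) x y)) ∧
    (∀ x y : ℝ, Qn (n+1) x y = Qn n (x + 1/(2*Real.sqrt 2)) y) ∧
    (∃ C > (0:ℝ), ∀ x y : ℝ, |Qn n x y| ≤ C / Real.sqrt (1 + x^2 + y^2)) := by
  exact ⟨fun x y => LumpAux.part1 n x y, fun x y => LumpAux.part2 n x y, LumpAux.part3 n⟩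
end
end

section
/- Let λ ∈ ℂ, λ ≠ 0, and let τ_n, τ_n′ (n ∈ ℤ) be twice continuously differentiable complex-valued functions of (s,t) ∈ ℝ². Define 𝒫 = [D_t D_s τ_n·τ_n − 2τ_{n+1}τ_{n-1} + 2τ_n²](τ_n′)² − [D_t D_s τ_n′·τ_n′ − 2τ_{n+1}′τ_{n-1}′ + 2(τ_n′)²]τ_n². Then, pointwise on ℝ² and for every n ∈ ℤ, (1/2)𝒫 = D_t[ D_s τ_n·τ_n′ − λ τ_{n+1}τ_{n-1}′ + λ τ_n τ_n′ ]·(τ_n′ τ_n) + λ[ D_t τ_{n+1}·τ_n′ + λ^{-1} τ_n τ_{n+1}′ − λ^{-1} τ_{n+1} τ_n′ ] τ_{n-1}′ τ_n − λ[ D_t τ_n·τ_{n-1}′ + λ^{-1} τ_{n-1} τ_n′ − λ^{-1} τ_n τ_{n-1}′ ] τ_n′ τ_{n+1}. -/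
noncomputable section

/-- Partial derivative in the first variable s. -/
def pds (f : ℝ → ℝ → ℂ) (s t : ℝ) : ℂ := deriv (fun s' => f s' t) s

/-- Partial derivative in the second variable t. -/
def pdt (f : ℝ → ℝ → ℂ) (s t : ℝ) : ℂ := deriv (fun t' => f s t') t

/-- Hirota bilinear derivative D_s f·g. -/
def Ds (f g : ℝ → ℝ → ℂ) (s t : ℝ) : ℂ := pds f s t * g s t - f s t * pds g s t

/-- Hirota bilinear derivative D_t f·g. -/
def Dt (f g : ℝ → ℝ → ℂ) (s t : ℝ) : ℂ := pdt f s t * g s t - f s t * pdt g s t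

/-- Hirota bilinear derivative D_t D_s f·g. -/
def DtDs (f g : ℝ → ℝ → ℂ) (s t : ℝ) : ℂ :=
  pdt (pds f) s t * g s t - pds f s t * pdt g s t - pdt f s t * pds g s t
    + f s t * pdt (pds g) s t

lemma pdt_eq (f : ℝ → ℝ → ℂ) (s t : ℝ) (d : ℂ)
    (h : HasDerivAt (fun t' => f s t') d t) : pdt f s t = d := h.deriv

lemma slice_diff (f : ℝ → ℝ → ℂ) (hf : ContDiff ℝ 2 fun p : ℝ × ℝ => f p.1 p.2)
    (s t : ℝ) : DifferentiableAt ℝ (fun t' => f s t') t := by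
  have h := (hf.differentiable two_ne_zero).comp
    (((differentiable_const s).prodMk differentiable_id : Differentiable ℝ fun t' : ℝ => (s, t')))
  exact h t

lemma pds_slice_diff (f : ℝ → ℝ → ℂ) (hf : ContDiff ℝ 2 fun p : ℝ × ℝ => f p.1 p.2)
    (s t : ℝ) : DifferentiableAt ℝ (fun t' => pds f s t') t := by
  have hF : Differentiable ℝ (fun p : ℝ × ℝ => f p.1 p.2) := hf.differentiable two_ne_zero
  have key : ∀ a b : ℝ, pds f a b = fderiv ℝ (fun p : ℝ × ℝ => f p.1 p.2) (a, b) ((1 : ℝ), (0 : ℝ)) := by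
    intro a b
    have h1 : HasDerivAt (fun s' : ℝ => ((s' : ℝ), b)) ((1 : ℝ), (0 : ℝ)) a :=
      HasDerivAt.prodMk (hasDerivAt_id a) (hasDerivAt_const a b)
    have h2 := (hF (a, b)).hasFDerivAt
    exact (h2.comp_hasDerivAt a h1).deriv
  have h1 : ContDiff ℝ 1 (fderiv ℝ fun p : ℝ × ℝ => f p.1 p.2) :=
    hf.fderiv_right (by norm_num)
  have h2 : Differentiable ℝ fun t' : ℝ =>
      fderiv ℝ (fun p : ℝ × ℝ => f p.1 p.2) (s, t') :=
    (h1.differentiable one_ne_zero).comp ((differentiable_const s).prodMk differentiable_id)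
  have h3 : Differentiable ℝ fun t' : ℝ =>
      fderiv ℝ (fun p : ℝ × ℝ => f p.1 p.2) (s, t') ((1 : ℝ), (0 : ℝ)) :=
    h2.clm_apply (differentiable_const _)
  have heq : (fun t' => pds f s t')
      = fun t' : ℝ => fderiv ℝ (fun p : ℝ × ℝ => f p.1 p.2) (s, t') ((1 : ℝ), (0 : ℝ)) :=
    funext fun t' => key s t'
  rw [heq]
  exact h3 t

/-- Hirota's exchange identity underlying the Bäcklund transformation of the
2+1 Toda lattice. -/
theorem hirota_exchange_identity
    (lam : ℂ) (hlam : lam ≠ 0)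
    (τ τ' : ℤ → ℝ → ℝ → ℂ)
    (hτ : ∀ n : ℤ, ContDiff ℝ 2 (fun p : ℝ × ℝ => τ n p.1 p.2))
    (hτ' : ∀ n : ℤ, ContDiff ℝ 2 (fun p : ℝ × ℝ => τ' n p.1 p.2)) :
    ∀ (n : ℤ) (s t : ℝ),
      (1/2) * ((DtDs (τ n) (τ n) s t - 2 * τ (n+1) s t * τ (n-1) s t + 2 * (τ n s t)^2)
                  * (τ' n s t)^2
              - (DtDs (τ' n) (τ' n) s t - 2 * τ' (n+1) s t * τ' (n-1) s t + 2 * (τ' n s t)^2)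
                  * (τ n s t)^2)
      = Dt (fun a b => Ds (τ n) (τ' n) a b - lam * τ (n+1) a b * τ' (n-1) a b
              + lam * τ n a b * τ' n a b)
            (fun a b => τ' n a b * τ n a b) s t
        + lam * (Dt (τ (n+1)) (τ' n) s t + lam⁻¹ * τ n s t * τ' (n+1) s t
              - lam⁻¹ * τ (n+1) s t * τ' n s t) * τ' (n-1) s t * τ n s t
        - lam * (Dt (τ n) (τ' (n-1)) s t + lam⁻¹ * τ (n-1) s t * τ' n s t
              - lam⁻¹ * τ n s t * τ' (n-1) s t) * τ' n s t * τ (n+1) s t := by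
  intro n s t
  have Ha : HasDerivAt (fun t' => τ n s t') (pdt (τ n) s t) t :=
    (slice_diff (τ n) (hτ n) s t).hasDerivAt
  have Hb : HasDerivAt (fun t' => τ' n s t') (pdt (τ' n) s t) t :=
    (slice_diff (τ' n) (hτ' n) s t).hasDerivAt
  have Hap : HasDerivAt (fun t' => τ (n+1) s t') (pdt (τ (n+1)) s t) t :=
    (slice_diff (τ (n+1)) (hτ (n+1)) s t).hasDerivAt
  have Hbm : HasDerivAt (fun t' => τ' (n-1) s t') (pdt (τ' (n-1)) s t) t :=
    (slice_diff (τ' (n-1)) (hτ' (n-1)) s t).hasDerivAt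
  have HaD : HasDerivAt (fun t' => pds (τ n) s t') (pdt (pds (τ n)) s t) t :=
    (pds_slice_diff (τ n) (hτ n) s t).hasDerivAt
  have HbD : HasDerivAt (fun t' => pds (τ' n) s t') (pdt (pds (τ' n)) s t) t :=
    (pds_slice_diff (τ' n) (hτ' n) s t).hasDerivAt
  have hF : pdt (fun a b => Ds (τ n) (τ' n) a b - lam * τ (n+1) a b * τ' (n-1) a b
        + lam * τ n a b * τ' n a b) s t
      = ((pdt (pds (τ n)) s t * τ' n s t + pds (τ n) s t * pdt (τ' n) s t)
          - (pdt (τ n) s t * pds (τ' n) s t + τ n s t * pdt (pds (τ' n)) s t))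
        - (lam * pdt (τ (n+1)) s t * τ' (n-1) s t
            + lam * τ (n+1) s t * pdt (τ' (n-1)) s t)
        + (lam * pdt (τ n) s t * τ' n s t + lam * τ n s t * pdt (τ' n) s t) := by
    apply pdt_eq
    exact (((HaD.mul Hb).sub (Ha.mul HbD)).sub ((Hap.const_mul lam).mul Hbm)).add
      ((Ha.const_mul lam).mul Hb)
  have hG : pdt (fun a b => τ' n a b * τ n a b) s t
      = pdt (τ' n) s t * τ n s t + τ' n s t * pdt (τ n) s t := by
    apply pdt_eq
    exact Hb.mul Ha
  simp only [Dt]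
  rw [hF, hG]
  simp only [Ds, DtDs]
  field_simp
  ring
end
end
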